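/- Let D : A → A/J be a ℂ-linear map satisfying the Leibniz rule D(f * g) = π(f)·D(g) + D(f)·π(g) for all f, g ∈ A, and let φ(s) = D(δ_s)·π(δ_{s*}). If Υ ∈ A/J is a common fixed point of the representation, i.e. π(δ_s)·Υ·π(δ_{s*}) + φ(s) = Υ for every s ∈ S, then D is the inner derivation implemented by −Υ: D(f) = Υ·π(f) − π(f)·Υ for every f ∈ A. -/

import Mathlib

open MonoidAlgebra

/-- An inverse semigroup: a semigroup in which every element `s` has a unique
generalized inverse `s*` with `s * s* * s = s` and `s* * s * s* = s*`. -/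
class InverseSemigroup (S : Type*) extends Semigroup S where
  star : S → S
  star_left : ∀ s : S, s * star s * s = s
  star_right : ∀ s : S, star s * s * star s = star s
  star_unique : ∀ s t : S, s * t * s = s → t * s * t = t → t = star s

variable (S : Type*) [InverseSemigroup S]

/-- The ℂ-linear span in the semigroup algebra `A = MonoidAlgebra ℂ S` of the set
`{δ_{s e t} - δ_{s t} : s, t ∈ S, e ∈ E}`, where `E = {e : e * e = e}` is the set of
idempotents of `S`. -/
noncomputable def J : Submodule ℂ (MonoidAlgebra ℂ S) :=
  Submodule.span ℂ { x | ∃ s t e : S, e * e = e ∧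
    x = single (s * e * t) (1 : ℂ) - single (s * t) (1 : ℂ) }

variable {S}

theorem mul_mem_J (f : MonoidAlgebra ℂ S) {x : MonoidAlgebra ℂ S} (hx : x ∈ J S) :
    f * x ∈ J S := by
  induction hx using Submodule.span_induction with
  | mem x hx =>
    obtain ⟨s, t, e, he, rfl⟩ := hx
    induction f using MonoidAlgebra.induction_linear with
    | zero => simp
    | add a b ha hb => rw [add_mul]; exact (J S).add_mem ha hb
    | single a b =>
      have : (single a b : MonoidAlgebra ℂ S) *
            (single (s * e * t) (1 : ℂ) - single (s * t) (1 : ℂ))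
          = b • (single ((a * s) * e * t) (1 : ℂ) - single ((a * s) * t) (1 : ℂ)) := by
        rw [mul_sub, single_mul_single, single_mul_single, smul_sub, smul_single', smul_single']
        simp [mul_assoc]
      rw [this]
      exact (J S).smul_mem _ (Submodule.subset_span ⟨a * s, t, e, he, rfl⟩)
  | zero => simp
  | add x y hx hy ihx ihy => rw [mul_add]; exact (J S).add_mem ihx ihy
  | smul c x hx ih => rw [mul_smul_comm]; exact (J S).smul_mem _ ih

theorem J_mul_mem (f : MonoidAlgebra ℂ S) {x : MonoidAlgebra ℂ S} (hx : x ∈ J S) :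
    x * f ∈ J S := by
  induction hx using Submodule.span_induction with
  | mem x hx =>
    obtain ⟨s, t, e, he, rfl⟩ := hx
    induction f using MonoidAlgebra.induction_linear with
    | zero => simp
    | add a b ha hb => rw [mul_add]; exact (J S).add_mem ha hb
    | single a b =>
      have : (single (s * e * t) (1 : ℂ) - single (s * t) (1 : ℂ)) *
            (single a b : MonoidAlgebra ℂ S)
          = b • (single (s * e * (t * a)) (1 : ℂ) - single (s * (t * a)) (1 : ℂ)) := by
        rw [sub_mul, single_mul_single, single_mul_single, smul_sub, smul_single', smul_single']
        simp [mul_assoc]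
      rw [this]
      exact (J S).smul_mem _ (Submodule.subset_span ⟨s, t * a, e, he, rfl⟩)
  | zero => simp
  | add x y hx hy ihx ihy => rw [add_mul]; exact (J S).add_mem ihx ihy
  | smul c x hx ih => rw [smul_mul_assoc]; exact (J S).smul_mem _ ih

/-- Multiplication of cosets in the quotient algebra `A ⧸ J`, well defined
since `J` is a two-sided ideal: `(f + J) * (g + J) = f * g + J`. -/
noncomputable instance : Mul (MonoidAlgebra ℂ S ⧸ J S) :=
  ⟨Quotient.map₂' (· * ·) (by
    intro a₁ a₂ h₁ b₁ b₂ h₂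
    have h₁' : a₁ - a₂ ∈ J S := (Submodule.quotientRel_def (J S)).mp h₁
    have h₂' : b₁ - b₂ ∈ J S := (Submodule.quotientRel_def (J S)).mp h₂
    refine (Submodule.quotientRel_def (J S)).mpr ?_
    have : a₁ * b₁ - a₂ * b₂ = a₁ * (b₁ - b₂) + (a₁ - a₂) * b₂ := by
      rw [mul_sub, sub_mul]; abel
    rw [this]
    exact (J S).add_mem (mul_mem_J _ h₂') (J_mul_mem _ h₁'))⟩

variable (S)

/-- The quotient map `π : A → A ⧸ J`, sending `f` to the coset `f + J`. -/
noncomputable def π : MonoidAlgebra ℂ S → MonoidAlgebra ℂ S ⧸ J S := Submodule.Quotient.mk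

theorem π_mul (f g : MonoidAlgebra ℂ S) : π S (f * g) = π S f * π S g := rfl

variable {S}


section Aux

variable {S : Type*} [InverseSemigroup S]

open InverseSemigroup

private lemma mul_idem {e f : S} (he : e * e = e) (hf : f * f = f) :
    (e * f) * (e * f) = e * f := by
  set a := star (e * f) with ha
  have h1 : (e * f) * a * (e * f) = e * f := star_left (e * f)
  have h2 : a * (e * f) * a = a := star_right (e * f)
  have h1' : e * (f * (a * (e * f))) = e * f := by simpa [mul_assoc] using h1
  have h2' : a * (e * (f * a)) = a := by simpa [mul_assoc] using h2
  have hq : f * a * e = a := by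
    have k1 : (e * f) * (f * a * e) * (e * f) = e * f := by
      calc (e * f) * (f * a * e) * (e * f)
          = e * ((f * f) * (a * ((e * e) * f))) := by simp [mul_assoc]
        _ = e * (f * (a * (e * f))) := by rw [hf, he]
        _ = e * f := h1'
    have k2 : (f * a * e) * (e * f) * (f * a * e) = f * a * e := by
      calc (f * a * e) * (e * f) * (f * a * e)
          = f * (a * ((e * e) * ((f * f) * (a * e)))) := by simp [mul_assoc]
        _ = f * (a * (e * (f * (a * e)))) := by rw [he, hf]
        _ = f * ((a * (e * (f * a))) * e) := by simp [mul_assoc]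
        _ = f * (a * e) := by rw [h2']
        _ = f * a * e := (mul_assoc _ _ _).symm
    exact (star_unique (e * f) (f * a * e) k1 k2).trans ha.symm
  have haa : a * a = a := by
    calc a * a = (f * a * e) * (f * a * e) := by rw [hq]
      _ = f * ((a * (e * (f * a))) * e) := by simp [mul_assoc]
      _ = f * (a * e) := by rw [h2']
      _ = f * a * e := (mul_assoc _ _ _).symm
      _ = a := hq
  have hefa : e * f = star a := by
    refine star_unique a (e * f) h2 h1
  have hasa : a = star a := by
    refine star_unique a a ?_ ?_ <;> rw [haa, haa]
  have : e * f = a := hefa.trans hasa.symm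
  rw [this, haa]

private lemma idem_comm {e f : S} (he : e * e = e) (hf : f * f = f) :
    e * f = f * e := by
  have hef := mul_idem he hf
  have hfe := mul_idem hf he
  have k1 : (e * f) * (f * e) * (e * f) = e * f := by
    calc (e * f) * (f * e) * (e * f)
        = e * ((f * f) * ((e * e) * f)) := by simp [mul_assoc]
      _ = e * (f * (e * f)) := by rw [hf, he]
      _ = (e * f) * (e * f) := by simp [mul_assoc]
      _ = e * f := hef
  have k2 : (f * e) * (e * f) * (f * e) = f * e := by
    calc (f * e) * (e * f) * (f * e)
        = f * ((e * e) * ((f * f) * e)) := by simp [mul_assoc]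
      _ = f * (e * (f * e)) := by rw [he, hf]
      _ = (f * e) * (f * e) := by simp [mul_assoc]
      _ = f * e := hfe
  have h1 : f * e = star (e * f) := star_unique (e * f) (f * e) k1 k2
  have h2 : e * f = star (e * f) := by
    refine star_unique (e * f) (e * f) ?_ ?_ <;> rw [hef, hef]
  exact h2.trans h1.symm

private lemma star_mul_self_idem (s : S) :
    (star s * s) * (star s * s) = star s * s := by
  have h : s * (star s * s) = s := by simpa [mul_assoc] using star_left s
  calc (star s * s) * (star s * s) = star s * (s * (star s * s)) := by simp [mul_assoc]
    _ = star s * s := by rw [h]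

private lemma single_mul_idem_sub_mem (u e : S) (he : e * e = e) :
    single (u * e) (1 : ℂ) - single u 1 ∈ J S := by
  have h1 : u * (star u * u) = u := by simpa [mul_assoc] using star_left u
  have h2 : u * e * (star u * u) = u * e := by
    calc u * e * (star u * u) = u * (e * (star u * u)) := mul_assoc _ _ _
      _ = u * ((star u * u) * e) := by rw [idem_comm he (star_mul_self_idem u)]
      _ = (u * (star u * u)) * e := (mul_assoc _ _ _).symm
      _ = u * e := by rw [h1]
  have hx : single (u * e) (1 : ℂ) - single u 1
      = single (u * e * (star u * u)) 1 - single (u * (star u * u)) 1 := by rw [h1, h2]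
  rw [hx]
  exact Submodule.subset_span ⟨u, star u * u, e, he, rfl⟩

private lemma mul_single_idem_sub_mem (f : MonoidAlgebra ℂ S) (e : S) (he : e * e = e) :
    f * single e 1 - f ∈ J S := by
  induction f using MonoidAlgebra.induction_linear with
  | zero => simp
  | add a b ha hb =>
    rw [add_mul, add_sub_add_comm]
    exact (J S).add_mem ha hb
  | single a b =>
    show single a b * single e (1 : ℂ) - single a b ∈ J S
    have hx : single a b * single e (1 : ℂ) - single a b
        = b • (single (a * e) 1 - single a 1) := by
      simp [single_mul_single, smul_sub, smul_single']
    rw [hx]; exact (J S).smul_mem _ (single_mul_idem_sub_mem a e he)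

private lemma π_add (a b : MonoidAlgebra ℂ S) : π S (a + b) = π S a + π S b :=
  Submodule.Quotient.mk_add _

private lemma π_zero : π S (0 : MonoidAlgebra ℂ S) = 0 :=
  Submodule.Quotient.mk_zero _

private lemma π_smul (c : ℂ) (a : MonoidAlgebra ℂ S) : π S (c • a) = c • π S a :=
  Submodule.Quotient.mk_smul _ _ _

end Aux

/-- with `D`, `φ` as before, if `Υ ∈ A ⧸ J` is a common fixed point of the
representation, i.e. `π(δ_s) · Υ · π(δ_{s*}) + φ(s) = Υ` for every `s ∈ S`, then `D` is the
inner derivation implemented by `-Υ`: `D(f) = Υ · π(f) - π(f) · Υ` for every `f ∈ A`. -/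
theorem fixed_point_implies_inner
    (D : MonoidAlgebra ℂ S →ₗ[ℂ] MonoidAlgebra ℂ S ⧸ J S)
    (hD : ∀ f g : MonoidAlgebra ℂ S, D (f * g) = π S f * D g + D f * π S g)
    (φ : S → MonoidAlgebra ℂ S ⧸ J S)
    (hφ : ∀ s : S, φ s = D (single s (1 : ℂ)) * π S (single (InverseSemigroup.star s) (1 : ℂ)))
    (Υ : MonoidAlgebra ℂ S ⧸ J S)
    (hΥ : ∀ s : S,
      π S (single s (1 : ℂ)) * Υ * π S (single (InverseSemigroup.star s) (1 : ℂ)) + φ s = Υ) :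
    ∀ f : MonoidAlgebra ℂ S, D f = Υ * π S f - π S f * Υ := by
  obtain ⟨g, hg⟩ := Submodule.Quotient.mk_surjective (J S) Υ
  have key : ∀ s : S, D (single s (1 : ℂ))
      = π S (g * single s 1) - π S (single s 1 * g) := by
    intro s
    set t := InverseSemigroup.star s with ht
    have hts : (t * s) * (t * s) = t * s := star_mul_self_idem s
    obtain ⟨d, hd⟩ := Submodule.Quotient.mk_surjective (J S) (D (single s (1 : ℂ)))
    have h := hΥ s
    rw [hφ s, ← hg, ← hd, ← ht] at h
    have h' : π S (single s (1 : ℂ) * g * single t 1 + d * single t 1) = π S g := by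
      rw [show π S (single s (1 : ℂ) * g * single t 1 + d * single t 1)
          = π S (single s (1 : ℂ) * g * single t 1) + π S (d * single t 1) from
        Submodule.Quotient.mk_add _, π_mul, π_mul, π_mul]
      exact h
    have hm : (single s (1 : ℂ) * g * single t 1 + d * single t 1) - g ∈ J S :=
      (Submodule.Quotient.eq _).mp h'
    have hm2 := J_mul_mem (single s (1 : ℂ)) hm
    have expand : (single s (1 : ℂ) * g * single t 1 + d * single t 1 - g) * single s 1
        = (single s (1 : ℂ) * g) * single (t * s) 1 + d * single (t * s) 1
          - g * single s 1 := by
      have hts1 : (single t (1 : ℂ)) * single s 1 = single (t * s) 1 := by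
        rw [single_mul_single, mul_one]
      rw [sub_mul, add_mul, mul_assoc (single s (1 : ℂ) * g), mul_assoc d, hts1]
    rw [expand] at hm2
    have m1 : (single s (1 : ℂ) * g) * single (t * s) 1 - single s (1 : ℂ) * g ∈ J S :=
      mul_single_idem_sub_mem _ _ hts
    have m2 : d * single (t * s) 1 - d ∈ J S := mul_single_idem_sub_mem _ _ hts
    have m3 : (single s (1 : ℂ) * g + d) - g * single s 1 ∈ J S := by
      have hmem := (J S).sub_mem ((J S).sub_mem hm2 m1) m2
      have hx : (single s (1 : ℂ) * g) * single (t * s) 1 + d * single (t * s) 1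
            - g * single s 1
          - ((single s (1 : ℂ) * g) * single (t * s) 1 - single s (1 : ℂ) * g)
          - (d * single (t * s) 1 - d)
          = (single s (1 : ℂ) * g + d) - g * single s 1 := by abel
      rwa [hx] at hmem
    have h4 : π S (single s (1 : ℂ) * g + d) = π S (g * single s 1) :=
      (Submodule.Quotient.eq _).mpr m3
    have h5 : π S (single s (1 : ℂ) * g) + π S d = π S (g * single s 1) := by
      rw [← h4]; exact (Submodule.Quotient.mk_add _).symm
    rw [← hd]
    show Submodule.Quotient.mk d = _
    have : π S d = π S (g * single s 1) - π S (single s (1 : ℂ) * g) :=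
      eq_sub_of_add_eq' h5
    exact this
  intro f
  rw [← hg]
  show D f = π S g * π S f - π S f * π S g
  rw [← π_mul, ← π_mul]
  induction f using MonoidAlgebra.induction_linear with
  | zero => rw [map_zero, mul_zero, zero_mul, π_zero, sub_zero]
  | add a b ha hb =>
    rw [map_add, ha, hb, mul_add, add_mul, π_add, π_add]
    abel
  | single a b =>
    show D (single a b) = π S (g * single a b) - π S (single a b * g)
    have hb1 : single a b = b • single a (1 : ℂ) := by
      rw [smul_single', mul_one]
    rw [hb1, map_smul, mul_smul_comm, smul_mul_assoc, π_smul, π_smul, ← smul_sub, key a]
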